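/- arXiv:2108.00643 — 3 statements merged into one kernel-verified Lean document; each statement's English description precedes it below -/
import Mathlib

section
/- For positive definite matrices A and B, the determinant of the t-spectral geometric mean equals (det A)^(1-t) (det B)^t, i.e., det(A ♮_t B) = (det A)^(1-t) (det B)^t. -/
open Matrix
open scoped ComplexOrder

noncomputable def mpow {m : Type*} [Fintype m] [DecidableEq m]
    (A : Matrix m m ℂ) (t : ℝ) : Matrix m m ℂ :=
  if h : A.IsHermitian then
    (h.eigenvectorUnitary : Matrix m m ℂ) *
      Matrix.diagonal (fun i => ((h.eigenvalues i ^ t : ℝ) : ℂ)) *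
      star (h.eigenvectorUnitary : Matrix m m ℂ)
  else A

/-- t-metric geometric mean `A ♯ₜ B`. -/
noncomputable def msharp {m : Type*} [Fintype m] [DecidableEq m]
    (A B : Matrix m m ℂ) (t : ℝ) : Matrix m m ℂ :=
  mpow A (1/2) * mpow (mpow A (-(1/2)) * B * mpow A (-(1/2))) t * mpow A (1/2)

/-- t-spectral geometric mean `A ♮ₜ B`. -/
noncomputable def mnat {m : Type*} [Fintype m] [DecidableEq m]
    (A B : Matrix m m ℂ) (t : ℝ) : Matrix m m ℂ :=
  mpow (msharp A⁻¹ B (1/2)) t * A * mpow (msharp A⁻¹ B (1/2)) t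

/-- Eigenvalues in non-increasing order (junk value `0` if not Hermitian). -/
noncomputable def eigsDesc {n : ℕ} (A : Matrix (Fin n) (Fin n) ℂ) : Fin n → ℝ :=
  if h : A.IsHermitian then (fun i => h.eigenvalues (Tuple.sort h.eigenvalues i.rev)) else 0

/-- `x` is log-majorized by `y` (both listed in non-increasing order). -/
def LogMaj {n : ℕ} (x y : Fin n → ℝ) : Prop :=
  (∀ k : ℕ, ∏ i ∈ Finset.univ.filter (fun i : Fin n => (i : ℕ) < k), x i ≤
      ∏ i ∈ Finset.univ.filter (fun i : Fin n => (i : ℕ) < k), y i) ∧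
    ∏ i, x i = ∏ i, y i

/-- k-th compound matrix. -/
noncomputable def compound {n : ℕ} (k : ℕ) (A : Matrix (Fin n) (Fin n) ℂ) :
    Matrix {s : Finset (Fin n) // s.card = k} {s : Finset (Fin n) // s.card = k} ℂ :=
  fun s t => (A.submatrix (fun i => (s.1.orderIsoOfFin s.2 i : Fin n))
    (fun i => (t.1.orderIsoOfFin t.2 i : Fin n))).det


lemma posDef_conj {m : Type*} [Fintype m] [DecidableEq m] {C M : Matrix m m ℂ}
    (hM : M.PosDef) (hC : IsUnit C) : (C * M * Cᴴ).PosDef := by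
  refine Matrix.PosDef.of_dotProduct_mulVec_pos (isHermitian_mul_mul_conjTranspose _ hM.1) fun x hx => ?_
  have hCx : Cᴴ *ᵥ x ≠ 0 := by
    have hCH : IsUnit (Cᴴ) := by
      rw [Matrix.isUnit_iff_isUnit_det, det_conjTranspose]
      exact ((Matrix.isUnit_iff_isUnit_det _).1 hC).star
    have : Function.Injective (Cᴴ).mulVec :=
      mulVec_injective_iff_isUnit.mpr hCH
    intro h0
    exact hx (by simpa using this (by simpa using h0))
  have := hM.dotProduct_mulVec_pos hCx
  convert this using 1
  rw [star_mulVec, conjTranspose_conjTranspose, ← dotProduct_mulVec,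
    ← mulVec_mulVec, ← mulVec_mulVec, dotProduct_mulVec]

lemma mpow_posDef {m : Type*} [Fintype m] [DecidableEq m] {M : Matrix m m ℂ}
    (hM : M.PosDef) (t : ℝ) : (mpow M t).PosDef := by
  rw [mpow, dif_pos hM.isHermitian]
  have hU : IsUnit (hM.isHermitian.eigenvectorUnitary : Matrix m m ℂ) :=
    ⟨⟨_, star (hM.isHermitian.eigenvectorUnitary : Matrix m m ℂ),
      (Matrix.mem_unitaryGroup_iff).mp (hM.isHermitian.eigenvectorUnitary).2,
      (Matrix.mem_unitaryGroup_iff').mp (hM.isHermitian.eigenvectorUnitary).2⟩, rfl⟩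
  have hD : (Matrix.diagonal (fun i => ((hM.isHermitian.eigenvalues i ^ t : ℝ) : ℂ))).PosDef := by
    apply Matrix.PosDef.diagonal
    intro i
    have := Real.rpow_pos_of_pos (hM.eigenvalues_pos i) t
    simpa using Complex.zero_lt_real.mpr this
  simpa [Matrix.star_eq_conjTranspose] using posDef_conj hD hU

lemma det_re_pos {m : Type*} [Fintype m] [DecidableEq m] {M : Matrix m m ℂ}
    (hM : M.PosDef) : 0 < M.det.re := by
  have := hM.det_pos
  rw [Complex.lt_def] at this
  simpa using this.1

lemma det_eq_re {m : Type*} [Fintype m] [DecidableEq m] {M : Matrix m m ℂ}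
    (hM : M.PosDef) : M.det = (M.det.re : ℂ) := by
  have := hM.det_pos
  rw [Complex.lt_def] at this
  exact Complex.ext (by simp) (by simp [← this.2])

lemma det_mpow {m : Type*} [Fintype m] [DecidableEq m] {M : Matrix m m ℂ}
    (hM : M.PosDef) (t : ℝ) : (mpow M t).det = ((M.det.re ^ t : ℝ) : ℂ) := by
  rw [mpow, dif_pos hM.isHermitian, det_mul_right_comm,
    (Matrix.mem_unitaryGroup_iff).mp (hM.isHermitian.eigenvectorUnitary).2]
  have hre : M.det.re = ∏ i, hM.isHermitian.eigenvalues i := by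
    rw [hM.isHermitian.det_eq_prod_eigenvalues, ← RCLike.ofReal_prod]
    exact Complex.ofReal_re _
  rw [one_mul, det_diagonal, hre, ← Real.finset_prod_rpow _ _
    (fun i _ => (hM.eigenvalues_pos i).le)]
  push_cast
  rfl

lemma key_real (x y t : ℝ) :
    ((Real.exp x)⁻¹ ^ ((1:ℝ)/2) *
      ((Real.exp x)⁻¹ ^ (-((1:ℝ)/2)) * Real.exp y * (Real.exp x)⁻¹ ^ (-((1:ℝ)/2))) ^ ((1:ℝ)/2) *
      (Real.exp x)⁻¹ ^ ((1:ℝ)/2)) ^ t * Real.exp x *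
    ((Real.exp x)⁻¹ ^ ((1:ℝ)/2) *
      ((Real.exp x)⁻¹ ^ (-((1:ℝ)/2)) * Real.exp y * (Real.exp x)⁻¹ ^ (-((1:ℝ)/2))) ^ ((1:ℝ)/2) *
      (Real.exp x)⁻¹ ^ ((1:ℝ)/2)) ^ t
    = Real.exp x ^ (1 - t) * Real.exp y ^ t := by
  rw [← Real.exp_neg]
  simp only [← Real.exp_add, Real.rpow_def_of_pos (Real.exp_pos _), Real.log_exp]
  rw [Real.exp_eq_exp]
  ring

theorem det_mnat {n : ℕ} (A B : Matrix (Fin n) (Fin n) ℂ)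
    (hA : A.PosDef) (hB : B.PosDef) (t : ℝ) (ht : t ∈ Set.Icc (0:ℝ) 1) :
    (mnat A B t).det = ((A.det.re ^ (1 - t) * B.det.re ^ t : ℝ) : ℂ) := by
  have hAi := hA.inv
  have hX : (mpow A⁻¹ (-(1/2))).PosDef := mpow_posDef hAi _
  have hXBX : (mpow A⁻¹ (-(1/2)) * B * mpow A⁻¹ (-(1/2))).PosDef := by
    have h := posDef_conj (C := mpow A⁻¹ (-(1/2))) hB hX.isUnit
    rwa [hX.isHermitian.eq] at h
  have hY := mpow_posDef hXBX (1/2)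
  have hZ : (mpow A⁻¹ (1/2)).PosDef := mpow_posDef hAi _
  have hS : (msharp A⁻¹ B (1/2)).PosDef := by
    rw [msharp]
    have h := posDef_conj (C := mpow A⁻¹ (1/2)) hY hZ.isUnit
    rwa [hZ.isHermitian.eq] at h
  -- determinant of A⁻¹
  have hAinv_re : A⁻¹.det.re = (A.det.re)⁻¹ := by
    have h1 : A.det * A⁻¹.det = 1 := by
      rw [← det_mul, mul_nonsing_inv _ ((Matrix.isUnit_iff_isUnit_det A).1 hA.isUnit), det_one]
    rw [det_eq_re hA, det_eq_re hAi] at h1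
    have h2 : A.det.re * A⁻¹.det.re = 1 := by exact_mod_cast h1
    exact (inv_eq_of_mul_eq_one_right h2).symm
  have hWre : (mpow A⁻¹ (-(1/2)) * B * mpow A⁻¹ (-(1/2))).det.re
      = A⁻¹.det.re ^ (-((1:ℝ)/2)) * B.det.re * A⁻¹.det.re ^ (-((1:ℝ)/2)) := by
    have : (mpow A⁻¹ (-(1/2)) * B * mpow A⁻¹ (-(1/2))).det
        = ((A⁻¹.det.re ^ (-((1:ℝ)/2)) * B.det.re * A⁻¹.det.re ^ (-((1:ℝ)/2)) : ℝ) : ℂ) := by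
      rw [det_mul, det_mul, det_mpow hAi, det_eq_re hB]
      push_cast [Complex.ofReal_re]
      ring
    rw [this]
    exact Complex.ofReal_re _
  have hdSre : (msharp A⁻¹ B (1/2)).det.re
      = A⁻¹.det.re ^ ((1:ℝ)/2) *
        (A⁻¹.det.re ^ (-((1:ℝ)/2)) * B.det.re * A⁻¹.det.re ^ (-((1:ℝ)/2))) ^ ((1:ℝ)/2) *
        A⁻¹.det.re ^ ((1:ℝ)/2) := by
    have : (msharp A⁻¹ B (1/2)).det
        = ((A⁻¹.det.re ^ ((1:ℝ)/2) *
        (A⁻¹.det.re ^ (-((1:ℝ)/2)) * B.det.re * A⁻¹.det.re ^ (-((1:ℝ)/2))) ^ ((1:ℝ)/2) *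
        A⁻¹.det.re ^ ((1:ℝ)/2) : ℝ) : ℂ) := by
      rw [msharp, det_mul, det_mul, det_mpow hAi, det_mpow hXBX, hWre]
      push_cast [Complex.ofReal_re]
      ring
    rw [this]
    exact Complex.ofReal_re _
  rw [mnat, det_mul, det_mul, det_mpow hS, det_eq_re hA]
  have goal_real : (msharp A⁻¹ B (1/2)).det.re ^ t * A.det.re *
      (msharp A⁻¹ B (1/2)).det.re ^ t = A.det.re ^ (1 - t) * B.det.re ^ t := by
    obtain ⟨x, hx⟩ : ∃ x, A.det.re = Real.exp x :=
      ⟨Real.log _, (Real.exp_log (det_re_pos hA)).symm⟩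
    obtain ⟨y, hy⟩ : ∃ y, B.det.re = Real.exp y :=
      ⟨Real.log _, (Real.exp_log (det_re_pos hB)).symm⟩
    rw [hdSre, hAinv_re, hx, hy]
    exact key_real x y t
  push_cast [← goal_real, Complex.ofReal_re]
  ring
end

section
/- For positive definite matrices A, B and t ∈ [0,1], the inverse of the t-spectral mean is the t-spectral mean of the inverses: (A ♮_t B)^{-1} = A^{-1} ♮_t B^{-1}. -/
open Matrix
open scoped ComplexOrder

section AuxLemmas

variable {m : Type*} [Fintype m] [DecidableEq m]

lemma contOn_finite {s : Set ℝ} (hs : s.Finite) (f : ℝ → ℝ) : ContinuousOn f s := by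
  have := hs.to_subtype
  rw [continuousOn_iff_continuous_restrict]
  exact continuous_of_discreteTopology

lemma contOn_spec (f : ℝ → ℝ) (A : Matrix m m ℂ) : ContinuousOn f (spectrum ℝ A) :=
  contOn_finite (Matrix.finite_real_spectrum (A := A)) f

lemma spec_pos {A : Matrix m m ℂ} (hA : A.PosDef) : ∀ x ∈ spectrum ℝ A, 0 < x := by
  rw [hA.isHermitian.spectrum_real_eq_range_eigenvalues]
  rintro x ⟨i, rfl⟩
  exact hA.eigenvalues_pos i

lemma mpow_eq_cfc {A : Matrix m m ℂ} (hA : A.IsHermitian) (t : ℝ) :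
    mpow A t = cfc (fun x : ℝ => x ^ t) A := by
  rw [hA.cfc_eq, Matrix.IsHermitian.cfc, mpow, dif_pos hA]
  rfl

lemma posDef_conj_s2 {A C : Matrix m m ℂ} (hA : A.PosDef) (hC : IsUnit C) :
    (C * A * Cᴴ).PosDef := by
  refine Matrix.PosDef.of_dotProduct_mulVec_pos (Matrix.isHermitian_mul_mul_conjTranspose _ hA.1) fun x hx => ?_
  have h1 : star x ⬝ᵥ ((C * A * Cᴴ) *ᵥ x) = star (Cᴴ *ᵥ x) ⬝ᵥ (A *ᵥ (Cᴴ *ᵥ x)) := by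
    simp only [star_mulVec, dotProduct_mulVec, vecMul_vecMul, conjTranspose_conjTranspose,
      mulVec_mulVec, Matrix.mul_assoc]
  rw [h1]
  apply hA.dotProduct_mulVec_pos
  intro h0
  apply hx
  have hdet : IsUnit Cᴴ.det := by
    rw [det_conjTranspose]
    exact ((Matrix.isUnit_iff_isUnit_det C).mp hC).star
  have : Cᴴ⁻¹ *ᵥ (Cᴴ *ᵥ x) = x := by
    rw [mulVec_mulVec, nonsing_inv_mul _ hdet, one_mulVec]
  rw [← this, h0, mulVec_zero]

lemma posDef_conj' {A C : Matrix m m ℂ} (hA : A.PosDef) (hC : C.PosDef) :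
    (C * A * C).PosDef := by
  have h := posDef_conj_s2 hA hC.isUnit
  rwa [hC.isHermitian.eq] at h

lemma mpow_posDef_s2 {A : Matrix m m ℂ} (hA : A.PosDef) (t : ℝ) : (mpow A t).PosDef := by
  rw [mpow, dif_pos hA.isHermitian]
  have hU : IsUnit (hA.isHermitian.eigenvectorUnitary : Matrix m m ℂ) :=
    ⟨⟨_, star (hA.isHermitian.eigenvectorUnitary : Matrix m m ℂ),
      hA.isHermitian.eigenvectorUnitary.2.2, hA.isHermitian.eigenvectorUnitary.2.1⟩, rfl⟩
  have hD : (Matrix.diagonal (fun i => ((hA.isHermitian.eigenvalues i ^ t : ℝ) : ℂ))).PosDef := by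
    apply Matrix.PosDef.diagonal
    intro i
    have : (0:ℝ) < hA.isHermitian.eigenvalues i ^ t :=
      Real.rpow_pos_of_pos (hA.eigenvalues_pos i) t
    simpa using this
  simpa [Matrix.star_eq_conjTranspose] using posDef_conj_s2 hD hU

lemma mpow_mul_mpow {A : Matrix m m ℂ} (hA : A.PosDef) (s t : ℝ) :
    mpow A s * mpow A t = mpow A (s + t) := by
  have hsa : IsSelfAdjoint A := hA.isHermitian
  rw [mpow_eq_cfc hA.isHermitian, mpow_eq_cfc hA.isHermitian, mpow_eq_cfc hA.isHermitian,
    ← cfc_mul _ _ A (contOn_spec _ A) (contOn_spec _ A)]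
  exact cfc_congr fun x hx => (Real.rpow_add (spec_pos hA x hx) s t).symm

lemma mpow_zero {A : Matrix m m ℂ} (hA : A.IsHermitian) : mpow A 0 = 1 := by
  have hsa : IsSelfAdjoint A := hA
  rw [mpow_eq_cfc hA]
  calc cfc (fun x : ℝ => x ^ (0:ℝ)) A = cfc (fun _ : ℝ => (1:ℝ)) A :=
        cfc_congr fun x _ => Real.rpow_zero x
    _ = 1 := cfc_const_one ℝ A

lemma mpow_inv {A : Matrix m m ℂ} (hA : A.PosDef) (t : ℝ) :
    (mpow A t)⁻¹ = mpow A (-t) :=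
  Matrix.inv_eq_right_inv (by rw [mpow_mul_mpow hA, add_neg_cancel, mpow_zero hA.isHermitian])

lemma mpow_matrix_inv {A : Matrix m m ℂ} (hA : A.PosDef) (t : ℝ) :
    mpow A⁻¹ t = mpow A (-t) := by
  have hsa : IsSelfAdjoint A := hA.isHermitian
  rw [mpow_eq_cfc hA.inv.isHermitian, mpow_eq_cfc hA.isHermitian]
  have hinv : A⁻¹ = cfc (fun x : ℝ => x⁻¹) A := by
    have hu := hA.isUnit
    lift A to (Matrix m m ℂ)ˣ using hu with u
    rw [cfc_inv_id u, Matrix.coe_units_inv]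
  rw [hinv, ← cfc_comp' (fun x : ℝ => x ^ t) (fun x : ℝ => x⁻¹) A
      (contOn_finite ((Matrix.finite_real_spectrum (A := A)).image _) _) (contOn_spec _ A)]
  exact cfc_congr fun x hx => by
    rw [Real.rpow_neg (spec_pos hA x hx).le, ← Real.inv_rpow (spec_pos hA x hx).le]

lemma msharp_posDef {A B : Matrix m m ℂ} (hA : A.PosDef) (hB : B.PosDef) (t : ℝ) :
    (msharp A B t).PosDef := by
  unfold msharp
  exact posDef_conj' (mpow_posDef_s2 (posDef_conj' hB (mpow_posDef_s2 hA (-(1/2)))) t)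
    (mpow_posDef_s2 hA (1/2))

lemma msharp_half_inv {A B : Matrix m m ℂ} (hA : A.PosDef) (hB : B.PosDef) :
    (msharp A⁻¹ B (1/2))⁻¹ = msharp A B⁻¹ (1/2) := by
  unfold msharp
  rw [mpow_matrix_inv hA, mpow_matrix_inv hA, neg_neg]
  have hC : (mpow A (1/2) * B * mpow A (1/2)).PosDef :=
    posDef_conj' hB (mpow_posDef_s2 hA (1/2))
  have hCinv : (mpow A (1/2) * B * mpow A (1/2))⁻¹ =
      mpow A (-(1/2)) * B⁻¹ * mpow A (-(1/2)) := by
    rw [Matrix.mul_inv_rev, Matrix.mul_inv_rev, mpow_inv hA, Matrix.mul_assoc]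
  rw [Matrix.mul_inv_rev, Matrix.mul_inv_rev, mpow_inv hA, neg_neg,
    mpow_inv hC, ← mpow_matrix_inv hC, hCinv]
  simp only [Matrix.mul_assoc]

end AuxLemmas


theorem mnat_inv {n : ℕ} (A B : Matrix (Fin n) (Fin n) ℂ)
    (hA : A.PosDef) (hB : B.PosDef) (t : ℝ) (ht : t ∈ Set.Icc (0:ℝ) 1) :
    (mnat A B t)⁻¹ = mnat A⁻¹ B⁻¹ t := by
  have hM : (msharp A⁻¹ B (1/2)).PosDef := msharp_posDef hA.inv hB (1/2)
  have hAA : (A⁻¹)⁻¹ = A :=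
    Matrix.nonsing_inv_nonsing_inv A ((Matrix.isUnit_iff_isUnit_det A).mp hA.isUnit)
  unfold mnat
  rw [hAA, ← msharp_half_inv hA hB, mpow_matrix_inv hM,
    Matrix.mul_inv_rev, Matrix.mul_inv_rev, mpow_inv hM, Matrix.mul_assoc]
end

section
/- It is not true in general that A ♯ B ≤ A ♮ B in the Löwner order for positive definite matrices: there exist 2×2 positive definite A, B such that A ♮ B − A ♯ B has a negative eigenvalue. For example A = [[6,-3],[-3,4]], B = [[4,-2],[-2,5]]. -/
open Matrix
open scoped ComplexOrder

section Lemmas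
variable {m : Type*} [Fintype m] [DecidableEq m] {A X : Matrix m m ℂ}

lemma mpow_posSemidef (hA : A.PosSemidef) (t : ℝ) : (mpow A t).PosSemidef := by
  rw [mpow, dif_pos hA.1]
  rw [show (star (hA.1.eigenvectorUnitary : Matrix m m ℂ)) =
      (hA.1.eigenvectorUnitary : Matrix m m ℂ)ᴴ from rfl]
  apply PosSemidef.mul_mul_conjTranspose_same
  refine posSemidef_diagonal_iff.mpr fun i ↦ ?_
  rw [RCLike.nonneg_iff]
  constructor
  · simpa using Real.rpow_nonneg (hA.eigenvalues_nonneg i) t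
  · simp

lemma mpow_mul_mpow_of_ne (hA : A.PosSemidef) {s t : ℝ} (hst : s + t ≠ 0) :
    mpow A s * mpow A t = mpow A (s + t) := by
  simp only [mpow, dif_pos hA.1]
  set U : Matrix m m ℂ := (hA.1.eigenvectorUnitary : Matrix m m ℂ) with hU
  have h1 : star U * U = 1 := (Matrix.mem_unitaryGroup_iff').mp hA.1.eigenvectorUnitary.2
  calc U * Matrix.diagonal (fun i => ((hA.1.eigenvalues i ^ s : ℝ) : ℂ)) * star U *
        (U * Matrix.diagonal (fun i => ((hA.1.eigenvalues i ^ t : ℝ) : ℂ)) * star U)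
      = U * (Matrix.diagonal (fun i => ((hA.1.eigenvalues i ^ s : ℝ) : ℂ)) * (star U * U) *
          Matrix.diagonal (fun i => ((hA.1.eigenvalues i ^ t : ℝ) : ℂ))) * star U := by
        simp only [Matrix.mul_assoc]
    _ = U * Matrix.diagonal (fun i => ((hA.1.eigenvalues i ^ (s+t) : ℝ) : ℂ)) * star U := by
        have hdiag : (Matrix.diagonal fun i => ((hA.1.eigenvalues i ^ s : ℝ) : ℂ)) *
            (Matrix.diagonal fun i => ((hA.1.eigenvalues i ^ t : ℝ) : ℂ)) =
            Matrix.diagonal fun i => ((hA.1.eigenvalues i ^ (s+t) : ℝ) : ℂ) := by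
          rw [Matrix.diagonal_mul_diagonal]
          apply congrArg Matrix.diagonal
          funext i
          rw [← Complex.ofReal_mul, ← Real.rpow_add' (hA.eigenvalues_nonneg i) hst]
        rw [h1, Matrix.mul_one, hdiag, Matrix.mul_assoc]

lemma mpow_one_eq (hA : A.IsHermitian) : mpow A 1 = A := by
  rw [mpow, dif_pos hA]
  simp only [Real.rpow_one]
  exact hA.spectral_theorem.symm

lemma mpow_zero_eq (hA : A.IsHermitian) : mpow A 0 = 1 := by
  rw [mpow, dif_pos hA]
  simp only [Real.rpow_zero, Complex.ofReal_one, Matrix.diagonal_one, Matrix.mul_one]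
  exact (Matrix.mem_unitaryGroup_iff).mp hA.eigenvectorUnitary.2

lemma mpow_half_eq (hA : A.PosSemidef) (hX : X.PosSemidef) (hXX : X * X = A) :
    mpow A (1/2) = X := by
  open scoped MatrixOrder Matrix.Norms.L2Operator in
  refine (CFC.sq_eq_sq_iff (mpow A (1/2)) X (mpow_posSemidef hA (1/2)).nonneg hX.nonneg).mp ?_
  rw [pow_two, pow_two, hXX, mpow_mul_mpow_of_ne hA (by norm_num)]
  norm_num [mpow_one_eq hA.1]

end Lemmas

section Lemmas2
variable {m : Type*} [Fintype m] [DecidableEq m] {A G B : Matrix m m ℂ}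

lemma mpow_mul_mpow_pd (hA : A.PosDef) (s t : ℝ) :
    mpow A s * mpow A t = mpow A (s + t) := by
  simp only [mpow, dif_pos hA.1]
  set U : Matrix m m ℂ := (hA.1.eigenvectorUnitary : Matrix m m ℂ) with hU
  have h1 : star U * U = 1 := (Matrix.mem_unitaryGroup_iff').mp hA.1.eigenvectorUnitary.2
  calc U * Matrix.diagonal (fun i => ((hA.1.eigenvalues i ^ s : ℝ) : ℂ)) * star U *
        (U * Matrix.diagonal (fun i => ((hA.1.eigenvalues i ^ t : ℝ) : ℂ)) * star U)
      = U * (Matrix.diagonal (fun i => ((hA.1.eigenvalues i ^ s : ℝ) : ℂ)) * (star U * U) *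
          Matrix.diagonal (fun i => ((hA.1.eigenvalues i ^ t : ℝ) : ℂ))) * star U := by
        simp only [Matrix.mul_assoc]
    _ = U * Matrix.diagonal (fun i => ((hA.1.eigenvalues i ^ (s+t) : ℝ) : ℂ)) * star U := by
        have hdiag : (Matrix.diagonal fun i => ((hA.1.eigenvalues i ^ s : ℝ) : ℂ)) *
            (Matrix.diagonal fun i => ((hA.1.eigenvalues i ^ t : ℝ) : ℂ)) =
            Matrix.diagonal fun i => ((hA.1.eigenvalues i ^ (s+t) : ℝ) : ℂ) := by
          rw [Matrix.diagonal_mul_diagonal]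
          apply congrArg Matrix.diagonal
          funext i
          rw [← Complex.ofReal_mul, ← Real.rpow_add (hA.eigenvalues_pos i)]
        rw [h1, Matrix.mul_one, hdiag, Matrix.mul_assoc]

lemma msharp_half_eq (hA : A.PosDef) (hG : G.PosDef)
    (hB : B = G * A⁻¹ * G) : msharp A B (1/2) = G := by
  set S : Matrix m m ℂ := mpow A (1/2) with hSdef
  set N : Matrix m m ℂ := mpow A (-(1/2)) with hNdef
  have hN : N.PosSemidef := mpow_posSemidef hA.posSemidef _
  have hNS : N * S = 1 := by
    rw [hSdef, hNdef, mpow_mul_mpow_pd hA]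
    norm_num [mpow_zero_eq hA.1]
  have hSN : S * N = 1 := by
    rw [hSdef, hNdef, mpow_mul_mpow_pd hA]
    norm_num [mpow_zero_eq hA.1]
  have hAinv : N * N = A⁻¹ := by
    have h2 := mpow_mul_mpow_pd hA (-1) 1
    rw [mpow_one_eq hA.1] at h2
    have h : mpow A (-1) * A = 1 := by rw [h2]; norm_num [mpow_zero_eq hA.1]
    have h3 : N * N = mpow A (-1) := by
      rw [hNdef, mpow_mul_mpow_pd hA]; norm_num
    rw [h3, Matrix.inv_eq_left_inv h]
  have hNGN : (N * G * N).PosSemidef := by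
    have h := hG.posSemidef.mul_mul_conjTranspose_same N
    rwa [hN.1] at h
  have hsq : (N * G * N) * (N * G * N) = N * B * N := by
    rw [hB, ← hAinv]
    noncomm_ring
  have hNBN : (N * B * N).PosSemidef := by
    rw [← hsq]
    nth_rewrite 1 [← hNGN.1]
    exact Matrix.posSemidef_conjTranspose_mul_self _
  have key : mpow (N * B * N) (1/2) = N * G * N := mpow_half_eq hNBN hNGN hsq
  rw [msharp, ← hSdef, ← hNdef, key]
  calc S * (N * G * N) * S = (S * N) * G * (N * S) := by noncomm_ring
    _ = G := by rw [hSN, hNS, Matrix.one_mul, Matrix.mul_one]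

end Lemmas2

lemma posDef_fin_two {a b c : ℝ} (M : Matrix (Fin 2) (Fin 2) ℂ)
    (hM : M = !![(a:ℂ), (b:ℂ); (b:ℂ), (c:ℂ)]) (ha : 0 < a) (hd : b * b < a * c) :
    M.PosDef := by
  subst hM
  have hc : 0 < c := by nlinarith [mul_self_nonneg b]
  refine Matrix.PosDef.of_dotProduct_mulVec_pos ?_ ?_
  · show _ᴴ = _
    ext i j
    fin_cases i <;> fin_cases j <;>
      simp [Matrix.conjTranspose_apply, Complex.conj_ofReal]
  · intro x hx
    have h01 : x 0 ≠ 0 ∨ x 1 ≠ 0 := by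
      by_contra h
      push_neg at h
      exact hx (funext fun i => by fin_cases i <;> simp [h.1, h.2])
    set p := (x 0).re; set q := (x 0).im; set r := (x 1).re; set s := (x 1).im
    have key : (star x ⬝ᵥ (!![(a:ℂ), (b:ℂ); (b:ℂ), (c:ℂ)] *ᵥ x)) =
        ((a*(p*p+q*q) + 2*b*(p*r+q*s) + c*(r*r+s*s) : ℝ) : ℂ) := by
      simp [dotProduct, Matrix.mulVec, Fin.sum_univ_two, Complex.ext_iff,
        Complex.add_re, Complex.add_im, Complex.mul_re, Complex.mul_im, p, q, r, s]
      constructor <;> ring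
    rw [key, Complex.lt_def]
    refine ⟨?_, by simp⟩
    simp only [Complex.zero_re, Complex.ofReal_re]
    rcases h01 with h0 | h1
    · have hp : 0 < p*p + q*q := by
        have := Complex.normSq_pos.mpr h0
        rwa [Complex.normSq_apply] at this
      nlinarith [sq_nonneg (b*p + c*r), sq_nonneg (b*q + c*s),
        mul_pos (show (0:ℝ) < a*c - b*b by nlinarith) hp]
    · have hr : 0 < r*r + s*s := by
        have := Complex.normSq_pos.mpr h1
        rwa [Complex.normSq_apply] at this
      nlinarith [sq_nonneg (a*p + b*r), sq_nonneg (a*q + b*s),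
        mul_pos (show (0:ℝ) < a*c - b*b by nlinarith) hr]

theorem not_msharp_le_mnat :
    ∃ A B : Matrix (Fin 2) (Fin 2) ℂ, A.PosDef ∧ B.PosDef ∧
      ¬ (mnat A B (1/2) - msharp A B (1/2)).PosSemidef := by
  set A : Matrix (Fin 2) (Fin 2) ℂ := !![1, -1; -1, 4] with hAdef
  set B : Matrix (Fin 2) (Fin 2) ℂ := !![109, 317; 317, 988] with hBdef
  set F : Matrix (Fin 2) (Fin 2) ℂ := !![2, 1; 1, 4] with hFdef
  set X : Matrix (Fin 2) (Fin 2) ℂ := !![5, 6; 6, 17] with hXdef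
  set G : Matrix (Fin 2) (Fin 2) ℂ := !![79/14, 67/7; 67/7, 296/7] with hGdef
  set Ai : Matrix (Fin 2) (Fin 2) ℂ := !![4/3, 1/3; 1/3, 1/3] with hAidef
  have hA : A.PosDef := by
    refine posDef_fin_two (a := 1) (b := -1) (c := 4) A ?_ (by norm_num) (by norm_num)
    ext i j; fin_cases i <;> fin_cases j <;> norm_num [hAdef]
  have hB : B.PosDef := by
    refine posDef_fin_two (a := 109) (b := 317) (c := 988) B ?_ (by norm_num) (by norm_num)
    ext i j; fin_cases i <;> fin_cases j <;> norm_num [hBdef]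
  have hF : F.PosDef := by
    refine posDef_fin_two (a := 2) (b := 1) (c := 4) F ?_ (by norm_num) (by norm_num)
    ext i j; fin_cases i <;> fin_cases j <;> norm_num [hFdef]
  have hX : X.PosDef := by
    refine posDef_fin_two (a := 5) (b := 6) (c := 17) X ?_ (by norm_num) (by norm_num)
    ext i j; fin_cases i <;> fin_cases j <;> norm_num [hXdef]
  have hG : G.PosDef := by
    refine posDef_fin_two (a := 79/14) (b := 67/7) (c := 296/7) G ?_ (by norm_num)
      (by norm_num)
    ext i j; fin_cases i <;> fin_cases j <;> norm_num [hGdef]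
  have hAAi : A * Ai = 1 := by
    ext i j
    fin_cases i <;> fin_cases j <;>
      norm_num [hAdef, hAidef, Matrix.mul_apply, Fin.sum_univ_two, Matrix.one_apply]
  have hAiA : Ai * A = 1 := by
    ext i j
    fin_cases i <;> fin_cases j <;>
      norm_num [hAdef, hAidef, Matrix.mul_apply, Fin.sum_univ_two, Matrix.one_apply]
  have hAi : A⁻¹ = Ai := Matrix.inv_eq_right_inv hAAi
  have hAii : (A⁻¹)⁻¹ = A := by rw [hAi]; exact Matrix.inv_eq_right_inv hAiA
  refine ⟨A, B, hA, hB, ?_⟩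
  have hsharp : msharp A B (1/2) = G := by
    refine msharp_half_eq hA hG ?_
    rw [hAi]
    ext i j
    fin_cases i <;> fin_cases j <;>
      norm_num [hBdef, hGdef, hAidef, Matrix.mul_apply, Fin.sum_univ_two]
  have hsharpinv : msharp A⁻¹ B (1/2) = X := by
    refine msharp_half_eq hA.inv hX ?_
    rw [hAii]
    ext i j
    fin_cases i <;> fin_cases j <;>
      norm_num [hBdef, hXdef, hAdef, Matrix.mul_apply, Fin.sum_univ_two]
  have hFX : mpow X (1/2) = F := by
    refine mpow_half_eq hX.posSemidef hF.posSemidef ?_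
    ext i j
    fin_cases i <;> fin_cases j <;>
      norm_num [hFdef, hXdef, Matrix.mul_apply, Fin.sum_univ_two]
  have hnat : mnat A B (1/2) = !![4, 9; 9, 57] := by
    rw [mnat, hsharpinv, hFX]
    ext i j
    fin_cases i <;> fin_cases j <;>
      norm_num [hFdef, hAdef, Matrix.mul_apply, Fin.sum_univ_two]
  intro hPSD
  have h := hPSD.dotProduct_mulVec_nonneg ![1, 0]
  rw [hnat, hsharp] at h
  simp only [dotProduct, Matrix.mulVec, Fin.sum_univ_two, Matrix.sub_apply,
    hGdef] at h
  norm_num [Complex.le_def] at h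
end
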